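/- For every integer n ≥ 3, C_n/n = Σ_{k=1}^{n−3} (−1)^{k+1} · 2^{k−1}/k! − (1/n) · (−1)^{n} · 2^{n−3}/(n−3)!. -/

import Mathlib

/-- `Lseg n = Σ_{k=1}^{n} (−1)^{k+1} (2^{k−1}/k!) (n−k+1)`, the expected number of
transmissions in one slot from a fully occupied segment of `n` nodes (so `Lseg 0 = 0`). -/
noncomputable def Lseg (n : ℕ) : ℝ :=
  ∑ k ∈ Finset.Icc 1 n,
    (-1 : ℝ) ^ (k + 1) * (2 ^ (k - 1) / (Nat.factorial k : ℝ)) * ((n : ℝ) - (k : ℝ) + 1)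

/-- `C_k = 1 + L_{k−3}`, the expected number of transmissions in one slot from a fully
occupied circle of `k ≥ 3` nodes. -/
noncomputable def Ccirc (k : ℕ) : ℝ := 1 + Lseg (k - 3)

lemma key_telescope (m : ℕ) :
    ∑ k ∈ Finset.Icc 1 m,
      (-1 : ℝ) ^ (k + 1) * (2 ^ (k - 1) / (Nat.factorial k : ℝ)) * ((k : ℝ) + 2)
    = 1 + (-1 : ℝ) ^ (m + 1) * (2 ^ m / (Nat.factorial m : ℝ)) := by
  induction m with
  | zero => simp
  | succ m ih =>
    rw [Finset.sum_Icc_succ_top (by omega : 1 ≤ m + 1), ih]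
    have hm : (Nat.factorial m : ℝ) ≠ 0 := Nat.cast_ne_zero.mpr (Nat.factorial_ne_zero m)
    have hm1 : ((m : ℝ) + 1) ≠ 0 := by positivity
    simp only [Nat.add_sub_cancel, Nat.factorial_succ]
    push_cast
    field_simp
    ring

/-- For every `n ≥ 3`,
`C_n/n = Σ_{k=1}^{n−3} (−1)^{k+1} 2^{k−1}/k! − (1/n)(−1)^n 2^{n−3}/(n−3)!`. -/
theorem Ccirc_div_formula (n : ℕ) (hn : 3 ≤ n) :
    Ccirc n / (n : ℝ) =
      (∑ k ∈ Finset.Icc 1 (n - 3), (-1 : ℝ) ^ (k + 1) * (2 ^ (k - 1) / (Nat.factorial k : ℝ)))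
        - (1 / (n : ℝ)) * (-1 : ℝ) ^ n * (2 ^ (n - 3) / (Nat.factorial (n - 3) : ℝ)) := by
  obtain ⟨m, rfl⟩ : ∃ m, n = m + 3 := ⟨n - 3, by omega⟩
  have hn0 : ((m : ℝ) + 3) ≠ 0 := by positivity
  have hcast : ((m + 3 : ℕ) : ℝ) = (m : ℝ) + 3 := by push_cast; ring
  simp only [Ccirc, Lseg, Nat.add_sub_cancel, hcast]
  rw [div_eq_iff hn0]
  have split : ∑ k ∈ Finset.Icc 1 m,
      (-1 : ℝ) ^ (k + 1) * (2 ^ (k - 1) / (Nat.factorial k : ℝ)) * ((m : ℝ) - (k : ℝ) + 1)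
      = (∑ k ∈ Finset.Icc 1 m,
          (-1 : ℝ) ^ (k + 1) * (2 ^ (k - 1) / (Nat.factorial k : ℝ))) * ((m : ℝ) + 3)
        - ∑ k ∈ Finset.Icc 1 m,
          (-1 : ℝ) ^ (k + 1) * (2 ^ (k - 1) / (Nat.factorial k : ℝ)) * ((k : ℝ) + 2) := by
    rw [Finset.sum_mul, ← Finset.sum_sub_distrib]
    exact Finset.sum_congr rfl fun k _ => by ring
  rw [split, key_telescope]
  have hpow : (-1 : ℝ) ^ (m + 3) = (-1 : ℝ) ^ (m + 1) := by
    rw [show m + 3 = (m + 1) + 2 from rfl, pow_add]; norm_num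
  rw [hpow]
  field_simp
  ring
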